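/- The forgetful map φ_i : F_{n+1} → F_n between ordered configuration spaces of the complex plane, which forgets the i-th point of a configuration, is a fiber bundle whose fiber is the complement of n points in the complex plane. -/

import Mathlib

noncomputable section

/-- The ordered configuration space of `n` points in the complex plane. -/
abbrev ConfigSpace (n : ℕ) : Type := { z : Fin n → ℂ // Function.Injective z }

/-- The Fadell–Neuwirth map `φ_i : F_{n+1} → F_n` forgetting the `i`-th point. -/
def forgetPoint (n : ℕ) (i : Fin (n + 1)) (z : ConfigSpace (n + 1)) : ConfigSpace n :=
  ⟨z.1 ∘ i.succAbove, z.2.comp (Fin.succAbove_right_injective)⟩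


namespace FNaux

/-- Piecewise-linear bump: `1` for `r ≤ ε`, `0` for `r ≥ 2ε`. -/
def bump (ε r : ℝ) : ℝ := max 0 (min 1 (2 - r / ε))

lemma bump_nonneg (ε r : ℝ) : 0 ≤ bump ε r := le_max_left _ _

lemma bump_le_one (ε r : ℝ) : bump ε r ≤ 1 :=
  max_le zero_le_one (min_le_left _ _)

lemma bump_eq_one {ε r : ℝ} (hε : 0 < ε) (h : r ≤ ε) : bump ε r = 1 := by
  have h1 : (1 : ℝ) ≤ 2 - r / ε := by
    have : r / ε ≤ 1 := (div_le_one hε).2 h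
    linarith
  rw [bump, min_eq_left h1, max_eq_right zero_le_one]

lemma bump_eq_zero {ε r : ℝ} (hε : 0 < ε) (h : 2 * ε ≤ r) : bump ε r = 0 := by
  have h1 : 2 - r / ε ≤ 0 := by
    have : 2 ≤ r / ε := (le_div_iff₀ hε).2 (by linarith)
    linarith
  rw [bump, max_eq_left]
  exact le_trans (min_le_right _ _) h1

lemma mul_bump_le {ε : ℝ} (hε : 0 < ε) (r : ℝ) : ε * bump ε r ≤ max 0 (2 * ε - r) := by
  rcases le_or_gt (2 * ε) r with h | h
  · rw [bump_eq_zero hε h, mul_zero]; exact le_max_left _ _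
  · have h0 : r / ε < 2 := (div_lt_iff₀ hε).2 (by linarith)
    have h1 : bump ε r ≤ 2 - r / ε := max_le (by linarith) (min_le_right _ _)
    have h2 : ε * bump ε r ≤ ε * (2 - r / ε) := by nlinarith
    have h3 : ε * (2 - r / ε) = 2 * ε - r := by field_simp
    exact le_trans (by linarith) (le_max_right 0 (2 * ε - r))

lemma bump_lipschitz {ε : ℝ} (hε : 0 < ε) (r r' : ℝ) :
    |bump ε r - bump ε r'| ≤ |r - r'| / ε := by
  have h1 : |bump ε r - bump ε r'| ≤ |min 1 (2 - r / ε) - min 1 (2 - r' / ε)| := by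
    rw [bump, bump, max_comm 0 (min 1 (2 - r / ε)), max_comm 0 (min 1 (2 - r' / ε))]
    exact abs_max_sub_max_le_abs _ _ _
  have h2 : |min 1 (2 - r / ε) - min 1 (2 - r' / ε)| ≤ |(2 - r / ε) - (2 - r' / ε)| := by
    have := abs_min_sub_min_le_max 1 (2 - r / ε) 1 (2 - r' / ε)
    simpa using this
  have h3 : |(2 - r / ε) - (2 - r' / ε)| = |r - r'| / ε := by
    rw [show (2 - r / ε) - (2 - r' / ε) = (r' - r) / ε by ring, abs_div,
      abs_of_pos hε, abs_sub_comm]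
  linarith


variable {n : ℕ} {b : Fin n → ℂ} {ε : ℝ}

/-- The displacement field moving `c j` to `b j` via disjointly supported bumps. -/
def gfun (b : Fin n → ℂ) (ε : ℝ) (c : Fin n → ℂ) (w : ℂ) : ℂ :=
  ∑ j, bump ε (dist w (b j)) • (b j - c j)

/-- The trivializing homeomorphism of `ℂ`. -/
def Phi (b : Fin n → ℂ) (ε : ℝ) (c : Fin n → ℂ) (w : ℂ) : ℂ := w + gfun b ε c w

lemma gfun_lip (hε : 0 < ε) (hsep : ∀ j k, j ≠ k → 4 * ε ≤ dist (b j) (b k))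
    {c : Fin n → ℂ} (hc : ∀ j, dist (c j) (b j) ≤ ε / 2) (w w' : ℂ) :
    dist (gfun b ε c w) (gfun b ε c w') ≤ (1 / 2) * dist w w' := by
  classical
  set t : ℂ → Fin n → ℂ := fun v j => bump ε (dist v (b j)) • (b j - c j) with ht
  have hnorm : ∀ j, ‖b j - c j‖ ≤ ε / 2 := fun j => by
    rw [← dist_eq_norm, dist_comm]; exact hc j
  have hzero : ∀ (v : ℂ) j, 2 * ε ≤ dist v (b j) → t v j = 0 := fun v j h => by
    simp [ht, bump_eq_zero hε h]
  have hbound : ∀ (v : ℂ) j, ‖t v j‖ ≤ (1 / 2) * max 0 (2 * ε - dist v (b j)) := by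
    intro v j
    rw [ht]
    simp only [norm_smul, Real.norm_of_nonneg (bump_nonneg _ _)]
    have h1 : bump ε (dist v (b j)) * ‖b j - c j‖ ≤ bump ε (dist v (b j)) * (ε / 2) :=
      mul_le_mul_of_nonneg_left (hnorm j) (bump_nonneg _ _)
    have h2 := mul_bump_le hε (dist v (b j))
    nlinarith [bump_nonneg ε (dist v (b j))]
  have hexcl : ∀ (v : ℂ) j k, j ≠ k → dist v (b j) < 2 * ε → 2 * ε ≤ dist v (b k) := by
    intro v j k hjk h1
    by_contra h2
    push_neg at h2
    have h3 := hsep j k hjk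
    have h4 := dist_triangle_left (b j) (b k) v
    linarith
  have hsum : gfun b ε c w - gfun b ε c w' = ∑ j, (t w j - t w' j) := by
    rw [gfun, gfun, ← Finset.sum_sub_distrib]
  rw [dist_eq_norm, hsum]
  by_cases h1 : ∃ j, dist w (b j) < 2 * ε
  · obtain ⟨j, hj⟩ := h1
    by_cases h2 : dist w' (b j) < 2 * ε
    · -- both near `b j`: single Lipschitz bump term
      rw [Finset.sum_eq_single j
        (fun k _ hk => by
          rw [hzero w k (hexcl w j k (Ne.symm hk) hj),
            hzero w' k (hexcl w' j k (Ne.symm hk) h2), sub_zero])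
        (fun h => absurd (Finset.mem_univ j) h)]
      have heq : t w j - t w' j = (bump ε (dist w (b j)) - bump ε (dist w' (b j))) • (b j - c j) := by
        rw [ht, sub_smul]
      rw [heq, norm_smul, Real.norm_eq_abs]
      have hL := bump_lipschitz hε (dist w (b j)) (dist w' (b j))
      have hd : |dist w (b j) - dist w' (b j)| ≤ dist w w' := abs_dist_sub_le _ _ _
      have h5 : |bump ε (dist w (b j)) - bump ε (dist w' (b j))| ≤ dist w w' / ε := by
        refine hL.trans ?_
        gcongr
      have h6 : |bump ε (dist w (b j)) - bump ε (dist w' (b j))| * ‖b j - c j‖ ≤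
          (dist w w' / ε) * (ε / 2) := by
        apply mul_le_mul h5 (hnorm j) (norm_nonneg _) (by positivity)
      have h7 : (dist w w' / ε) * (ε / 2) = (1 / 2) * dist w w' := by
        field_simp
      linarith
    · push_neg at h2
      by_cases h3 : ∃ k, dist w' (b k) < 2 * ε
      · obtain ⟨k, hk⟩ := h3
        have hjk : j ≠ k := fun h => by rw [← h] at hk; linarith
        calc ‖∑ j', (t w j' - t w' j')‖ ≤ ∑ j', ‖t w j' - t w' j'‖ := norm_sum_le _ _
          _ = ∑ j' ∈ ({j, k} : Finset (Fin n)), ‖t w j' - t w' j'‖ := by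
              refine (Finset.sum_subset (Finset.subset_univ _) ?_).symm
              intro x _ hx
              simp only [Finset.mem_insert, Finset.mem_singleton, not_or] at hx
              rw [hzero w x (hexcl w j x (fun h => hx.1 h.symm) hj),
                hzero w' x (hexcl w' k x (fun h => hx.2 h.symm) hk), sub_zero, norm_zero]
          _ = ‖t w j - t w' j‖ + ‖t w k - t w' k‖ := Finset.sum_pair hjk
          _ ≤ (1 / 2) * dist w w' := by
              rw [hzero w' j h2, sub_zero, hzero w k (hexcl w j k hjk hj), zero_sub, norm_neg]
              have hb1 := hbound w j
              have hb2 := hbound w' k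
              have hm1 : max 0 (2 * ε - dist w (b j)) = 2 * ε - dist w (b j) :=
                max_eq_right (by linarith)
              have hm2 : max 0 (2 * ε - dist w' (b k)) = 2 * ε - dist w' (b k) :=
                max_eq_right (by linarith)
              have h4 := hsep j k hjk
              have h5 := dist_triangle4 (b j) w w' (b k)
              have h6 : dist (b j) w = dist w (b j) := dist_comm _ _
              have h7 : dist w' (b k) = dist w' (b k) := rfl
              rw [hm1] at hb1; rw [hm2] at hb2
              linarith
      · push_neg at h3
        rw [Finset.sum_eq_single j
          (fun k _ hk => by
            rw [hzero w k (hexcl w j k (Ne.symm hk) hj), hzero w' k (h3 k), sub_zero])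
          (fun h => absurd (Finset.mem_univ j) h)]
        rw [hzero w' j (h3 j), sub_zero]
        have hb1 := hbound w j
        have hm1 : max 0 (2 * ε - dist w (b j)) = 2 * ε - dist w (b j) :=
          max_eq_right (by linarith)
        have h4 := h3 j
        have h5 := dist_triangle w' w (b j)
        have h6 : dist w' w = dist w w' := dist_comm _ _
        rw [hm1] at hb1
        linarith
  · push_neg at h1
    by_cases h3 : ∃ k, dist w' (b k) < 2 * ε
    · obtain ⟨k, hk⟩ := h3
      rw [Finset.sum_eq_single k
        (fun j _ hj => by
          rw [hzero w j (h1 j), hzero w' j (hexcl w' k j (Ne.symm hj) hk), sub_zero])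
        (fun h => absurd (Finset.mem_univ k) h)]
      rw [hzero w k (h1 k), zero_sub, norm_neg]
      have hb2 := hbound w' k
      have hm2 : max 0 (2 * ε - dist w' (b k)) = 2 * ε - dist w' (b k) :=
        max_eq_right (by linarith)
      have h4 := h1 k
      have h5 := dist_triangle w w' (b k)
      rw [hm2] at hb2
      linarith
    · push_neg at h3
      have : ∀ j' ∈ Finset.univ, t w j' - t w' j' = (0 : ℂ) := fun j' _ => by
        rw [hzero w j' (h1 j'), hzero w' j' (h3 j'), sub_zero]
      rw [Finset.sum_congr rfl this, Finset.sum_const, smul_zero, norm_zero]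
      positivity

lemma dist_le_two_mul_dist_Phi (hε : 0 < ε) (hsep : ∀ j k, j ≠ k → 4 * ε ≤ dist (b j) (b k))
    {c : Fin n → ℂ} (hc : ∀ j, dist (c j) (b j) ≤ ε / 2) (w w' : ℂ) :
    dist w w' ≤ 2 * dist (Phi b ε c w) (Phi b ε c w') := by
  have h1 := gfun_lip hε hsep hc w w'
  have h2 : dist w w' ≤ dist (Phi b ε c w) (Phi b ε c w') +
      dist (gfun b ε c w) (gfun b ε c w') := by
    have h3 := dist_sub_sub_le (Phi b ε c w) (gfun b ε c w) (Phi b ε c w') (gfun b ε c w')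
    simpa [Phi, add_sub_cancel_right] using h3
  linarith

lemma Phi_inj (hε : 0 < ε) (hsep : ∀ j k, j ≠ k → 4 * ε ≤ dist (b j) (b k))
    {c : Fin n → ℂ} (hc : ∀ j, dist (c j) (b j) ≤ ε / 2) {w w' : ℂ}
    (h : Phi b ε c w = Phi b ε c w') : w = w' := by
  have h1 := dist_le_two_mul_dist_Phi hε hsep hc w w'
  rw [h, dist_self, mul_zero] at h1
  exact dist_le_zero.mp h1

lemma Phi_base (hε : 0 < ε) (hsep : ∀ j k, j ≠ k → 4 * ε ≤ dist (b j) (b k))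
    {c : Fin n → ℂ} (hc : ∀ j, dist (c j) (b j) ≤ ε / 2) (j : Fin n) :
    Phi b ε c (c j) = b j := by
  classical
  rw [Phi, gfun, Finset.sum_eq_single j
    (fun k _ hk => by
      have h4 := hsep j k (Ne.symm hk)
      have h5 := dist_triangle (b j) (c j) (b k)
      have h6 : dist (b j) (c j) = dist (c j) (b j) := dist_comm _ _
      have h7 : 2 * ε ≤ dist (c j) (b k) := by linarith [hc j]
      rw [bump_eq_zero hε h7, zero_smul])
    (fun h => absurd (Finset.mem_univ j) h)]
  rw [bump_eq_one hε (le_trans (hc j) (by linarith)), one_smul]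
  ring

lemma contractingWith (hε : 0 < ε) (hsep : ∀ j k, j ≠ k → 4 * ε ≤ dist (b j) (b k))
    {c : Fin n → ℂ} (hc : ∀ j, dist (c j) (b j) ≤ ε / 2) (z : ℂ) :
    ContractingWith (1 / 2 : NNReal) (fun w => z - gfun b ε c w) := by
  constructor
  · rw [← NNReal.coe_lt_coe]; norm_num
  · apply LipschitzWith.of_dist_le_mul
    intro w w'
    rw [dist_sub_left]
    have := gfun_lip hε hsep hc w w'
    calc dist (gfun b ε c w) (gfun b ε c w') ≤ (1 / 2) * dist w w' := this
      _ = (1 / 2 : NNReal) * dist w w' := by norm_num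

/-- The inverse of `Phi`, via the Banach fixed point theorem. -/
def Psi (b : Fin n → ℂ) (ε : ℝ) (hε : 0 < ε)
    (hsep : ∀ j k, j ≠ k → 4 * ε ≤ dist (b j) (b k))
    (c : Fin n → ℂ) (hc : ∀ j, dist (c j) (b j) ≤ ε / 2) (z : ℂ) : ℂ :=
  ContractingWith.fixedPoint (fun w => z - gfun b ε c w) (contractingWith hε hsep hc z)

lemma Phi_Psi (hε : 0 < ε) (hsep : ∀ j k, j ≠ k → 4 * ε ≤ dist (b j) (b k))
    (c : Fin n → ℂ) (hc : ∀ j, dist (c j) (b j) ≤ ε / 2) (z : ℂ) :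
    Phi b ε c (Psi b ε hε hsep c hc z) = z := by
  have h := (contractingWith hε hsep hc z).fixedPoint_isFixedPt
  have h2 : z - gfun b ε c (Psi b ε hε hsep c hc z) = Psi b ε hε hsep c hc z := h
  rw [Phi]
  linear_combination -h2

lemma Psi_Phi (hε : 0 < ε) (hsep : ∀ j k, j ≠ k → 4 * ε ≤ dist (b j) (b k))
    (c : Fin n → ℂ) (hc : ∀ j, dist (c j) (b j) ≤ ε / 2) (w : ℂ) :
    Psi b ε hε hsep c hc (Phi b ε c w) = w :=
  Phi_inj hε hsep hc (Phi_Psi hε hsep c hc (Phi b ε c w))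

lemma gfun_dist_c (c c' : Fin n → ℂ) (w : ℂ) :
    dist (gfun b ε c w) (gfun b ε c' w) ≤ ∑ j, dist (c j) (c' j) := by
  rw [dist_eq_norm, gfun, gfun, ← Finset.sum_sub_distrib]
  refine (norm_sum_le _ _).trans (Finset.sum_le_sum fun j _ => ?_)
  rw [← smul_sub]
  have : b j - c j - (b j - c' j) = c' j - c j := by ring
  rw [this, norm_smul, Real.norm_of_nonneg (bump_nonneg _ _)]
  calc bump ε (dist w (b j)) * ‖c' j - c j‖ ≤ 1 * ‖c' j - c j‖ :=
        mul_le_mul_of_nonneg_right (bump_le_one _ _) (norm_nonneg _)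
    _ = dist (c j) (c' j) := by rw [one_mul, ← dist_eq_norm, dist_comm]

lemma Psi_dist (hε : 0 < ε) (hsep : ∀ j k, j ≠ k → 4 * ε ≤ dist (b j) (b k))
    (c c' : Fin n → ℂ) (hc : ∀ j, dist (c j) (b j) ≤ ε / 2)
    (hc' : ∀ j, dist (c' j) (b j) ≤ ε / 2) (z z' : ℂ) :
    dist (Psi b ε hε hsep c hc z) (Psi b ε hε hsep c' hc' z') ≤
      2 * dist z z' + 2 * ∑ j, dist (c j) (c' j) := by
  set x := Psi b ε hε hsep c hc z
  set x' := Psi b ε hε hsep c' hc' z'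
  have h1 : dist x x' ≤ 2 * dist (Phi b ε c x) (Phi b ε c x') :=
    dist_le_two_mul_dist_Phi hε hsep hc x x'
  have h2 : Phi b ε c x = z := Phi_Psi hε hsep c hc z
  have h3 : Phi b ε c' x' = z' := Phi_Psi hε hsep c' hc' z'
  have h4 : dist (Phi b ε c x) (Phi b ε c x') ≤ dist z z' + dist z' (Phi b ε c x') := by
    rw [h2]; exact dist_triangle _ _ _
  have h5 : dist z' (Phi b ε c x') = dist (gfun b ε c' x') (gfun b ε c x') := by
    rw [← h3, Phi, Phi, dist_add_left]
  have h6 : dist (gfun b ε c' x') (gfun b ε c x') ≤ ∑ j, dist (c' j) (c j) :=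
    gfun_dist_c c' c x'
  have h7 : ∑ j, dist (c' j) (c j) = ∑ j, dist (c j) (c' j) := by
    refine Finset.sum_congr rfl fun j _ => dist_comm _ _
  linarith

lemma insertNth_injective {α : Type*} {n : ℕ} (i : Fin (n + 1)) {x : α} {c : Fin n → α}
    (hc : Function.Injective c) (hx : ∀ j, x ≠ c j) :
    Function.Injective (i.insertNth x c) := by
  intro a a' h
  rcases eq_or_ne a i with rfl | ha
  · rcases eq_or_ne a' a with rfl | ha'
    · rfl
    · obtain ⟨k, hk⟩ := Fin.exists_succAbove_eq ha'
      rw [← hk, Fin.insertNth_apply_same, Fin.insertNth_apply_succAbove] at h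
      exact (hx k h).elim
  · obtain ⟨k, hk⟩ := Fin.exists_succAbove_eq ha
    rcases eq_or_ne a' i with rfl | ha'
    · rw [← hk, Fin.insertNth_apply_succAbove, Fin.insertNth_apply_same] at h
      exact (hx k h.symm).elim
    · obtain ⟨k', hk'⟩ := Fin.exists_succAbove_eq ha'
      rw [← hk, ← hk', Fin.insertNth_apply_succAbove, Fin.insertNth_apply_succAbove] at h
      rw [← hk, ← hk', hc h]

lemma continuous_bump : Continuous (bump ε) := by
  unfold bump
  exact continuous_const.max (continuous_const.min
    (continuous_const.sub (continuous_id.div_const ε)))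

lemma continuous_Phi : Continuous fun p : (Fin n → ℂ) × ℂ => Phi b ε p.1 p.2 := by
  unfold Phi gfun
  refine continuous_snd.add (continuous_finset_sum _ fun j _ => ?_)
  exact (continuous_bump.comp (continuous_snd.dist continuous_const)).smul
    (continuous_const.sub ((continuous_apply j).comp continuous_fst))

lemma continuous_Psi (hε : 0 < ε) (hsep : ∀ j k, j ≠ k → 4 * ε ≤ dist (b j) (b k)) :
    Continuous fun q : {c : Fin n → ℂ // ∀ j, dist (c j) (b j) ≤ ε / 2} × ℂ =>
      Psi b ε hε hsep q.1.1 q.1.2 q.2 := by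
  refine LipschitzWith.continuous (K := ⟨2 + 2 * n, by positivity⟩)
    (LipschitzWith.of_dist_le_mul fun q q' => ?_)
  have h1 := Psi_dist hε hsep q.1.1 q'.1.1 q.1.2 q'.1.2 q.2 q'.2
  have h2 : dist q.2 q'.2 ≤ dist q q' := by
    rw [Prod.dist_eq]; exact le_max_right _ _
  have h3 : ∀ j, dist (q.1.1 j) (q'.1.1 j) ≤ dist q q' := by
    intro j
    have ha := dist_le_pi_dist q.1.1 q'.1.1 j
    have hb : dist q.1.1 q'.1.1 = dist q.1 q'.1 := (Subtype.dist_eq q.1 q'.1).symm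
    have hcp : dist q.1 q'.1 ≤ dist q q' := by
      rw [Prod.dist_eq]; exact le_max_left _ _
    linarith
  have h4 : ∑ j, dist (q.1.1 j) (q'.1.1 j) ≤ (n : ℝ) * dist q q' := by
    calc ∑ j, dist (q.1.1 j) (q'.1.1 j) ≤ ∑ _j : Fin n, dist q q' :=
          Finset.sum_le_sum fun j _ => h3 j
      _ = (n : ℝ) * dist q q' := by
          rw [Finset.sum_const, Finset.card_univ, Fintype.card_fin, nsmul_eq_mul]
  show _ ≤ (2 + 2 * (n : ℝ)) * dist q q'
  nlinarith [dist_nonneg (x := q) (y := q')]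

end FNaux

theorem forgetPoint_isFiberBundle (n : ℕ) (hn : 1 ≤ n) (i : Fin (n + 1)) :
    Continuous (forgetPoint n i) ∧
    ∀ b : ConfigSpace n, ∃ U : Set (ConfigSpace n), IsOpen U ∧ b ∈ U ∧
      ∃ F : Set ℂ, F.Finite ∧ F.ncard = n ∧
      ∃ e : {p : ConfigSpace (n + 1) // forgetPoint n i p ∈ U} ≃ₜ U × (Fᶜ : Set ℂ),
        ∀ p, ((e p).1 : ConfigSpace n) = forgetPoint n i p.1 := by
  classical
  have hforget : Continuous (forgetPoint n i) := by
    have h : Continuous fun z : ConfigSpace (n + 1) =>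
        (fun j => z.1 (i.succAbove j) : Fin n → ℂ) :=
      continuous_pi fun j => (continuous_apply (i.succAbove j)).comp continuous_subtype_val
    exact h.subtype_mk _
  refine ⟨hforget, ?_⟩
  intro b
  obtain ⟨ε, hε, hsep⟩ : ∃ ε : ℝ, 0 < ε ∧ ∀ j k, j ≠ k → 4 * ε ≤ dist (b.1 j) (b.1 k) := by
    set s : Finset ℝ := ((Finset.univ : Finset (Fin n × Fin n)).filter
      fun p => p.1 ≠ p.2).image fun p => dist (b.1 p.1) (b.1 p.2) with hs
    by_cases hne : s.Nonempty
    · refine ⟨s.min' hne / 4, ?_, ?_⟩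
      · obtain ⟨p, hp0, hd⟩ := Finset.mem_image.mp (s.min'_mem hne)
        have hp : p.1 ≠ p.2 := (Finset.mem_filter.mp hp0).2
        have : 0 < dist (b.1 p.1) (b.1 p.2) :=
          dist_pos.2 fun h => hp (b.2 h)
        rw [hd] at this
        linarith
      · intro j k hjk
        have hmem : dist (b.1 j) (b.1 k) ∈ s := by
          rw [hs]
          simp only [Finset.mem_image, Finset.mem_filter]
          exact ⟨(j, k), ⟨Finset.mem_univ _, hjk⟩, rfl⟩
        have := s.min'_le _ hmem
        linarith
    · refine ⟨1, one_pos, fun j k hjk => absurd ?_ hne⟩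
      exact ⟨dist (b.1 j) (b.1 k), by
        rw [hs]
        simp only [Finset.mem_image, Finset.mem_filter]
        exact ⟨(j, k), ⟨Finset.mem_univ _, hjk⟩, rfl⟩⟩
  have hUopen : IsOpen {c : ConfigSpace n | ∀ j, dist (c.1 j) (b.1 j) < ε / 2} := by
    have heq : {c : ConfigSpace n | ∀ j, dist (c.1 j) (b.1 j) < ε / 2} =
        ⋂ j, {c : ConfigSpace n | dist (c.1 j) (b.1 j) < ε / 2} := by
      ext c; simp [Set.mem_iInter]
    rw [heq]
    exact isOpen_iInter_of_finite fun j =>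
      isOpen_lt (Continuous.dist ((continuous_apply j).comp continuous_subtype_val)
        continuous_const) continuous_const
  refine ⟨{c : ConfigSpace n | ∀ j, dist (c.1 j) (b.1 j) < ε / 2}, hUopen,
    fun j => by rw [dist_self]; positivity, Set.range b.1, Set.finite_range _, ?_, ?_⟩
  · rw [← Nat.card_coe_set_eq, Nat.card_range_of_injective b.2,
      Nat.card_eq_fintype_card, Fintype.card_fin]
  have hcmem : ∀ c : ConfigSpace n, (c ∈ {c : ConfigSpace n | ∀ j, dist (c.1 j) (b.1 j) < ε / 2}) →
      ∀ j, dist (c.1 j) (b.1 j) ≤ ε / 2 := fun c hc j => (hc j).le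
  have hfwd : ∀ p : {p : ConfigSpace (n + 1) //
        forgetPoint n i p ∈ {c : ConfigSpace n | ∀ j, dist (c.1 j) (b.1 j) < ε / 2}},
      FNaux.Phi b.1 ε (forgetPoint n i p.1).1 (p.1.1 i) ∈ (Set.range b.1)ᶜ := by
    intro p
    rintro ⟨j, hj⟩
    have hc := hcmem _ p.2
    have h1 : FNaux.Phi b.1 ε (forgetPoint n i p.1).1 ((forgetPoint n i p.1).1 j) = b.1 j :=
      FNaux.Phi_base hε hsep hc j
    have h2 : (forgetPoint n i p.1).1 j = p.1.1 i :=
      FNaux.Phi_inj hε hsep hc (h1.trans hj)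
    have h3 : p.1.1 (i.succAbove j) = p.1.1 i := h2
    exact Fin.succAbove_ne i j (p.1.2 h3)
  have hne : ∀ (q : ↥{c : ConfigSpace n | ∀ j, dist (c.1 j) (b.1 j) < ε / 2} ×
      ↥(Set.range b.1)ᶜ) (j : Fin n),
      FNaux.Psi b.1 ε hε hsep q.1.1.1 (hcmem _ q.1.2) q.2.1 ≠ q.1.1.1 j := by
    intro q j h
    have h1 := FNaux.Phi_Psi hε hsep q.1.1.1 (hcmem _ q.1.2) q.2.1
    rw [h, FNaux.Phi_base hε hsep (hcmem _ q.1.2) j] at h1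
    exact q.2.2 ⟨j, h1⟩
  refine ⟨⟨⟨fun p => (⟨forgetPoint n i p.1, p.2⟩,
      ⟨FNaux.Phi b.1 ε (forgetPoint n i p.1).1 (p.1.1 i), hfwd p⟩),
      fun q => ⟨⟨i.insertNth (FNaux.Psi b.1 ε hε hsep q.1.1.1 (hcmem _ q.1.2) q.2.1) q.1.1.1,
        FNaux.insertNth_injective i q.1.1.2 (hne q)⟩,
        fun j => by
          have := q.1.2 j
          simpa [forgetPoint] using this⟩,
      ?_, ?_⟩, ?_, ?_⟩, fun p => rfl⟩
  · -- left inverse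
    intro p
    refine Subtype.ext (Subtype.ext ?_)
    have h1 : FNaux.Psi b.1 ε hε hsep (forgetPoint n i p.1).1 (hcmem _ p.2)
        (FNaux.Phi b.1 ε (forgetPoint n i p.1).1 (p.1.1 i)) = p.1.1 i :=
      FNaux.Psi_Phi hε hsep _ _ _
    show i.insertNth (FNaux.Psi b.1 ε hε hsep (forgetPoint n i p.1).1 (hcmem _ p.2)
        (FNaux.Phi b.1 ε (forgetPoint n i p.1).1 (p.1.1 i))) (forgetPoint n i p.1).1 = p.1.1
    rw [h1]
    exact Fin.insertNth_self_removeNth i p.1.1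
  · -- right inverse
    intro q
    have hfst : forgetPoint n i ⟨i.insertNth
          (FNaux.Psi b.1 ε hε hsep q.1.1.1 (hcmem _ q.1.2) q.2.1) q.1.1.1,
        FNaux.insertNth_injective i q.1.1.2 (hne q)⟩ = q.1.1 :=
      Subtype.ext (funext fun j => by simp [forgetPoint])
    have h2 : FNaux.Phi b.1 ε (forgetPoint n i ⟨i.insertNth
          (FNaux.Psi b.1 ε hε hsep q.1.1.1 (hcmem _ q.1.2) q.2.1) q.1.1.1,
        FNaux.insertNth_injective i q.1.1.2 (hne q)⟩).1
        ((i.insertNth (FNaux.Psi b.1 ε hε hsep q.1.1.1 (hcmem _ q.1.2) q.2.1) q.1.1.1 :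
          Fin (n + 1) → ℂ) i) = q.2.1 := by
      rw [hfst, Fin.insertNth_apply_same]
      exact FNaux.Phi_Psi hε hsep _ _ _
    exact Prod.ext (Subtype.ext hfst) (Subtype.ext h2)
  · -- continuity of forward map
    have hval2 : Continuous fun p : {p : ConfigSpace (n + 1) //
        forgetPoint n i p ∈ {c : ConfigSpace n | ∀ j, dist (c.1 j) (b.1 j) < ε / 2}} =>
        (p.1.1 : Fin (n + 1) → ℂ) :=
      continuous_subtype_val.comp continuous_subtype_val
    refine Continuous.prodMk ?_ ?_
    · exact Continuous.subtype_mk (hforget.comp continuous_subtype_val) _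
    · refine Continuous.subtype_mk ?_ _
      have hmap : Continuous fun p : {p : ConfigSpace (n + 1) //
          forgetPoint n i p ∈ {c : ConfigSpace n | ∀ j, dist (c.1 j) (b.1 j) < ε / 2}} =>
          (((forgetPoint n i p.1).1 : Fin n → ℂ), p.1.1 i) := by
        refine Continuous.prodMk ?_ ?_
        · exact continuous_pi fun j => (continuous_apply (i.succAbove j)).comp hval2
        · exact (continuous_apply i).comp hval2
      exact FNaux.continuous_Phi.comp hmap
  · -- continuity of inverse map
    refine Continuous.subtype_mk (Continuous.subtype_mk ?_ _) _
    have hcv : Continuous fun q : ↥{c : ConfigSpace n | ∀ j, dist (c.1 j) (b.1 j) < ε / 2} ×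
        ↥(Set.range b.1)ᶜ => (q.1.1.1 : Fin n → ℂ) :=
      continuous_subtype_val.comp (continuous_subtype_val.comp continuous_fst)
    refine Continuous.finInsertNth i ?_ hcv
    have hmap : Continuous fun q : ↥{c : ConfigSpace n | ∀ j, dist (c.1 j) (b.1 j) < ε / 2} ×
        ↥(Set.range b.1)ᶜ =>
        ((⟨q.1.1.1, hcmem _ q.1.2⟩ : {c : Fin n → ℂ // ∀ j, dist (c j) (b.1 j) ≤ ε / 2}),
          (q.2.1 : ℂ)) :=
      Continuous.prodMk (Continuous.subtype_mk hcv _)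
        (continuous_subtype_val.comp continuous_snd)
    exact (FNaux.continuous_Psi hε hsep).comp hmap


end
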